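/- For every ε ∈ (0,1), the sets G_ε \ D and B_ε \ D are each dense in [0,1]: between any two dyadic rationals there is a non-dyadic good channel and a non-dyadic bad channel of the binary erasure channel with erasure probability ε. -/

import Mathlib

open Filter Set MeasureTheory

noncomputable section

/-- `g_0(z) = 2z - z²` (bit `false`), `g_1(z) = z²` (bit `true`). -/
def gBit (c : Bool) (z : ℝ) : ℝ := if c then z ^ 2 else 2 * z - z ^ 2

/-- `pPre b n z = g_{b_n}(g_{b_{n-1}}(⋯ g_{b_1}(z) ⋯))`, where `b_i` is `b (i-1)`. -/
def pPre (b : ℕ → Bool) : ℕ → ℝ → ℝ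
  | 0, z => z
  | n + 1, z => gBit (b n) (pPre b n z)

/-- `f(b) = Σ_{n ≥ 1} b_n 2^{-n}`. -/
def fBin (b : ℕ → Bool) : ℝ := ∑' n : ℕ, (if b n then (1 : ℝ) else 0) / 2 ^ (n + 1)

/-- The dyadic rationals in `[0,1]`. -/
def dyadics : Set ℝ := Set.Icc 0 1 ∩ {x : ℝ | ∃ (p : ℤ) (n : ℕ), x = (p : ℝ) / 2 ^ n}

/-- The good channels of a BEC with erasure probability `ε`: `x ∈ [0,1]` such that some binary
expansion `b` of `x` satisfies `p_{b^n}(ε) → 0`. -/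
def Gset (ε : ℝ) : Set ℝ :=
  {x : ℝ | ∃ b : ℕ → Bool, fBin b = x ∧ Tendsto (fun n => pPre b n ε) atTop (nhds 0)}

/-- The bad channels of a BEC with erasure probability `ε`: `x ∈ [0,1]` such that some binary
expansion `b` of `x` satisfies `p_{b^n}(ε) → 1`. -/
def Bset (ε : ℝ) : Set ℝ :=
  {x : ℝ | ∃ b : ℕ → Bool, fBin b = x ∧ Tendsto (fun n => pPre b n ε) atTop (nhds 1)}

/-- Hamming weight `w(b^n)` of the length-`n` prefix of `b`. -/
def wPre (b : ℕ → Bool) (n : ℕ) : ℕ := ∑ i ∈ Finset.range n, (if b i then 1 else 0)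

/-- `b` is `ρ`-heavy: `liminf_{n→∞} (w(b^n) - nρ) ≥ 0` (the liminf computed in `EReal`),
equivalently `liminf 2^{w(b^n)} / 2^{nρ} ≥ 1`. -/
def Heavy (ρ : ℝ) (b : ℕ → Bool) : Prop :=
  0 ≤ atTop.liminf (fun n : ℕ => (((wPre b n : ℝ) - n * ρ : ℝ) : EReal))

/-- The set of `ρ`-heavy channels. -/
def Hset (ρ : ℝ) : Set ℝ := {x : ℝ | ∃ b : ℕ → Bool, fBin b = x ∧ Heavy ρ b}


namespace GB

lemma pPre_succ (b : ℕ → Bool) (n : ℕ) (z : ℝ) :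
    pPre b (n+1) z = gBit (b n) (pPre b n z) := rfl

lemma gBit_mem_Icc {c : Bool} {z : ℝ} (hz : z ∈ Set.Icc (0:ℝ) 1) : gBit c z ∈ Set.Icc (0:ℝ) 1 := by
  obtain ⟨h0, h1⟩ := hz
  cases c <;> simp only [gBit, if_true, if_false, Bool.false_eq_true] <;>
    constructor <;> nlinarith

lemma gBit_mem_Ioo {c : Bool} {z : ℝ} (hz : z ∈ Set.Ioo (0:ℝ) 1) : gBit c z ∈ Set.Ioo (0:ℝ) 1 := by
  obtain ⟨h0, h1⟩ := hz
  cases c <;> simp only [gBit, if_true, if_false, Bool.false_eq_true] <;>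
    constructor <;> nlinarith

lemma pPre_mem_Icc {b : ℕ → Bool} {ε : ℝ} (h : ε ∈ Set.Icc (0:ℝ) 1) (n : ℕ) :
    pPre b n ε ∈ Set.Icc (0:ℝ) 1 := by
  induction n with
  | zero => exact h
  | succ n ih => exact gBit_mem_Icc ih

lemma pPre_mem_Ioo {b : ℕ → Bool} {ε : ℝ} (h : ε ∈ Set.Ioo (0:ℝ) 1) (n : ℕ) :
    pPre b n ε ∈ Set.Ioo (0:ℝ) 1 := by
  induction n with
  | zero => exact h
  | succ n ih => exact gBit_mem_Ioo ih

lemma pPre_congr {b b' : ℕ → Bool} {n : ℕ} (h : ∀ i < n, b i = b' i) (z : ℝ) :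
    pPre b n z = pPre b' n z := by
  induction n with
  | zero => rfl
  | succ n ih =>
      rw [pPre_succ, pPre_succ, ih (fun i hi => h i (by omega)), h n (by omega)]

/-- term sequence of `fBin`. -/
def cSeq (b : ℕ → Bool) (i : ℕ) : ℝ := (if b i then (1:ℝ) else 0) / 2 ^ (i+1)

lemma fBin_eq (b : ℕ → Bool) : fBin b = ∑' i, cSeq b i := rfl

lemma cSeq_nonneg (b : ℕ → Bool) (i : ℕ) : 0 ≤ cSeq b i := by
  unfold cSeq; split_ifs <;> positivity

lemma cSeq_le (b : ℕ → Bool) (i : ℕ) : cSeq b i ≤ (1/2:ℝ) ^ (i+1) := by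
  unfold cSeq
  rw [div_pow, one_pow]
  split_ifs
  · exact le_refl _
  · rw [zero_div]; positivity

lemma summable_half : Summable (fun i : ℕ => (1/2:ℝ) ^ (i+1)) := by
  exact (summable_nat_add_iff 1).2 (summable_geometric_of_lt_one (by norm_num) (by norm_num))

lemma summable_cSeq (b : ℕ → Bool) : Summable (cSeq b) :=
  Summable.of_nonneg_of_le (cSeq_nonneg b) (cSeq_le b) summable_half

lemma tsum_half_shift (m : ℕ) : ∑' i : ℕ, (1/2:ℝ) ^ (i + m + 1) = (1/2:ℝ) ^ m := by
  have h : ∀ i : ℕ, (1/2:ℝ) ^ (i + m + 1) = (1/2:ℝ)^(m+1) * (1/2)^i := by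
    intro i; rw [← pow_add]; ring_nf
  rw [tsum_congr h, tsum_mul_left, tsum_geometric_of_lt_one (by norm_num) (by norm_num),
    show ((1:ℝ) - 1/2)⁻¹ = 2 by norm_num, pow_succ]
  ring

lemma summable_half_shift (m : ℕ) : Summable (fun i : ℕ => (1/2:ℝ) ^ (i + m + 1)) := by
  simpa [add_assoc] using (summable_nat_add_iff (f := fun i : ℕ => (1/2:ℝ)^(i+1)) m).2 summable_half

lemma fBin_split (b : ℕ → Bool) (n : ℕ) :
    fBin b = (∑ i ∈ Finset.range n, cSeq b i) + ∑' i, cSeq b (i + n) := by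
  rw [fBin_eq, ← Summable.sum_add_tsum_nat_add n (summable_cSeq b)]

lemma tail_nonneg (b : ℕ → Bool) (n : ℕ) : 0 ≤ ∑' i, cSeq b (i + n) :=
  tsum_nonneg (fun i => cSeq_nonneg b _)

lemma tail_le (b : ℕ → Bool) (n : ℕ) : ∑' i, cSeq b (i + n) ≤ (1/2:ℝ)^n := by
  rw [← tsum_half_shift n]
  exact Summable.tsum_le_tsum (fun i => cSeq_le b _) ((summable_nat_add_iff n).2 (summable_cSeq b))
    (summable_half_shift n)


lemma tail_pos {b : ℕ → Bool} {n : ℕ} (h : ∃ i, b (i + n) = true) :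
    0 < ∑' i, cSeq b (i + n) := by
  obtain ⟨d, hd⟩ := h
  have hle : cSeq b (d + n) ≤ ∑' i, cSeq b (i + n) :=
    Summable.le_tsum (f := fun i => cSeq b (i + n)) ((summable_nat_add_iff n).2 (summable_cSeq b)) d
      (fun j _ => cSeq_nonneg b _)
  have : (0:ℝ) < cSeq b (d + n) := by
    unfold cSeq; rw [hd]; norm_num
  linarith

lemma tail_lt {b : ℕ → Bool} {n : ℕ} (h : ∃ i, b (i + n) = false) :
    ∑' i, cSeq b (i + n) < (1/2:ℝ)^n := by
  obtain ⟨d, hd⟩ := h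
  rw [← tsum_half_shift n]
  apply Summable.tsum_lt_tsum_of_nonneg (fun i => cSeq_nonneg b _) (fun i => cSeq_le b _)
    (i := d) _ (summable_half_shift n)
  unfold cSeq; rw [hd]
  simp only [Bool.false_eq_true, if_false, zero_div]
  positivity

/-- If `b` has infinitely many `true`s and infinitely many `false`s, `fBin b` is not a dyadic
rational. -/
lemma not_dyadic {b : ℕ → Bool} (ht : ∀ n, ∃ i, b (i + n) = true)
    (hf : ∀ n, ∃ i, b (i + n) = false) :
    ¬ ∃ (p : ℤ) (m : ℕ), fBin b = (p : ℝ) / 2 ^ m := by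
  rintro ⟨p, m, hx⟩
  have hsplit := fBin_split b m
  set S := ∑ i ∈ Finset.range m, cSeq b i with hS
  set T := ∑' i, cSeq b (i + m) with hT
  have hT0 : 0 < T := tail_pos (ht m)
  have hT1 : T < (1/2:ℝ)^m := tail_lt (hf m)
  set K : ℤ := ∑ i ∈ Finset.range m, (if b i then 2^(m-1-i) else 0) with hK
  have hSK : S * 2 ^ m = (K : ℝ) := by
    rw [hS, hK, Finset.sum_mul]
    push_cast
    apply Finset.sum_congr rfl
    intro i hi
    have him : i < m := Finset.mem_range.1 hi
    have hpow : (2:ℝ)^(m-1-i) * 2^(i+1) = 2^m := by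
      rw [← pow_add]; congr 1; omega
    unfold cSeq
    split_ifs <;> field_simp
    linarith [hpow]
    simp
  have hpm : (p : ℝ) = K + T * 2^m := by
    have h2 : (0:ℝ) < 2^m := by positivity
    have : S + T = (p:ℝ)/2^m := by rw [← hsplit, hx]
    field_simp at this
    nlinarith [this, hSK]
  have hTm1 : T * 2^m < 1 := by
    have : (1/2:ℝ)^m * 2^m = 1 := by
      rw [div_pow, one_pow, div_mul_cancel₀]
      positivity
    nlinarith
  have hTm0 : 0 < T * 2^m := by positivity
  have h1 : (K : ℝ) < p := by rw [hpm]; linarith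
  have h2 : (p : ℝ) < K + 1 := by rw [hpm]; linarith
  have h1' : K < p := by exact_mod_cast h1
  have h2' : p < K + 1 := by exact_mod_cast h2
  omega

/-- Binary digit recursion: remainders. -/
def rSeq (x : ℝ) : ℕ → ℝ
  | 0 => x
  | n + 1 => 2 * rSeq x n - (if (1:ℝ)/2 ≤ rSeq x n then 1 else 0)

def digit (x : ℝ) (n : ℕ) : Bool := decide ((1:ℝ)/2 ≤ rSeq x n)

lemma rSeq_mem {x : ℝ} (hx : x ∈ Set.Icc (0:ℝ) 1) : ∀ n, rSeq x n ∈ Set.Icc (0:ℝ) 1 := by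
  intro n
  induction n with
  | zero => exact hx
  | succ n ih =>
      obtain ⟨h0, h1⟩ := ih
      show 2 * rSeq x n - (if (1:ℝ)/2 ≤ rSeq x n then 1 else 0) ∈ Set.Icc (0:ℝ) 1
      split_ifs with h <;> constructor <;> simp <;> linarith

lemma digit_sum {x : ℝ} (n : ℕ) :
    x = (∑ i ∈ Finset.range n, cSeq (digit x) i) + rSeq x n / 2^n := by
  induction n with
  | zero => simp [rSeq]
  | succ n ih =>
      rw [Finset.sum_range_succ]
      have hr : rSeq x (n+1) = 2 * rSeq x n - (if (1:ℝ)/2 ≤ rSeq x n then 1 else 0) := rfl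
      have hkey : cSeq (digit x) n + rSeq x (n+1) / 2^(n+1) = rSeq x n / 2^n := by
        simp only [cSeq, digit, decide_eq_true_eq, hr]
        rcases le_or_gt ((1:ℝ)/2) (rSeq x n) with h | h
        · rw [if_pos h, pow_succ]; ring
        · rw [if_neg (not_le.2 h), pow_succ]; ring
      linarith [ih]

/-- complement symmetry for `pPre`. -/
lemma pPre_not (b : ℕ → Bool) (ε : ℝ) (n : ℕ) :
    pPre (fun i => !(b i)) n (1 - ε) = 1 - pPre b n ε := by
  induction n with
  | zero => rfl
  | succ n ih =>
      rw [pPre_succ, pPre_succ, ih]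
      cases hb : b n <;> simp only [hb, Bool.not_false, Bool.not_true, gBit, if_true, if_false,
        Bool.false_eq_true] <;> ring

lemma fBin_not (b : ℕ → Bool) : fBin (fun i => !(b i)) = 1 - fBin b := by
  have h1 : ∑' i : ℕ, (1/2:ℝ)^(i+1) = 1 := by
    simpa using tsum_half_shift 0
  have h : ∀ i : ℕ, cSeq (fun j => !(b j)) i = (1/2:ℝ)^(i+1) - cSeq b i := by
    intro i
    unfold cSeq
    cases hb : b i <;> simp [hb, div_pow]
  rw [fBin_eq, fBin_eq, tsum_congr h, Summable.tsum_sub summable_half (summable_cSeq b), h1]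

lemma sq_le_self {t : ℝ} (h0 : 0 ≤ t) (h1 : t ≤ 1) : t^2 ≤ t := by nlinarith

lemma approx_good {ε : ℝ} (hε : ε ∈ Set.Ioo (0:ℝ) 1) {x : ℝ} (hx : x ∈ Set.Icc (0:ℝ) 1)
    {δ : ℝ} (hδ : 0 < δ) :
    ∃ b : ℕ → Bool, Tendsto (fun n => pPre b n ε) atTop (nhds 0) ∧
      (∀ n, ∃ i, b (i + n) = true) ∧ (∀ n, ∃ i, b (i + n) = false) ∧ |fBin b - x| < δ := by
  have hεIcc : ε ∈ Set.Icc (0:ℝ) 1 := ⟨hε.1.le, hε.2.le⟩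
  obtain ⟨N, hN⟩ : ∃ N : ℕ, (1/2:ℝ)^N < δ :=
    exists_pow_lt_of_lt_one hδ (by norm_num)
  set d := digit x with hd
  set pN := pPre d N ε with hpNdef
  have hpN : pN ∈ Set.Ioo (0:ℝ) 1 := pPre_mem_Ioo hε N
  obtain ⟨M, hM⟩ : ∃ M : ℕ, pN ^ M < 1/4 :=
    exists_pow_lt_of_lt_one (by norm_num) hpN.2
  set b : ℕ → Bool := fun i =>
    if i < N then d i else if i < N + M then true else decide ((i - (N+M)) % 3 ≠ 2) with hb
  have hbp : ∀ i < N, b i = d i := by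
    intro i hi; simp only [hb]; rw [if_pos hi]
  have hbt : ∀ m, b (N + M + m) = decide (m % 3 ≠ 2) := by
    intro m
    simp only [hb]
    rw [if_neg (by omega), if_neg (by omega)]
    have : N + M + m - (N + M) = m := by omega
    rw [this]
  have h0 : pPre b N ε = pN := pPre_congr (fun i hi => hbp i hi) ε
  -- after the M trues
  have h1 : ∀ m ≤ M, pPre b (N + m) ε = pN ^ (2^m) := by
    intro m hm
    induction m with
    | zero => simpa using h0
    | succ m ih =>
        have hmM : m ≤ M := by omega
        have hbm : b (N + m) = true := by
          simp only [hb]; rw [if_neg (by omega), if_pos (by omega)]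
        have : pPre b (N + (m+1)) ε = gBit (b (N+m)) (pPre b (N+m) ε) := rfl
        rw [this, hbm, ih hmM]
        simp only [gBit, if_true]
        rw [← pow_mul, pow_succ]
  have ha0 : pPre b (N + M) ε ≤ 1/4 := by
    rw [h1 M le_rfl]
    calc pN ^ (2^M) ≤ pN ^ M :=
          pow_le_pow_of_le_one hpN.1.le hpN.2.le (Nat.lt_two_pow_self (n := M)).le
      _ ≤ 1/4 := hM.le
  have hIcc : ∀ n, pPre b n ε ∈ Set.Icc (0:ℝ) 1 := pPre_mem_Icc hεIcc
  -- within-block equations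
  have e1 : ∀ k, pPre b (N + M + 3*k + 1) ε = (pPre b (N + M + 3*k) ε)^2 := by
    intro k
    have hbk : b (N + M + 3*k) = true := by
      rw [hbt (3*k)]
      have h3 : (3*k) % 3 = 0 := by omega
      rw [h3]; decide
    have : pPre b (N + M + 3*k + 1) ε = gBit (b (N + M + 3*k)) (pPre b (N + M + 3*k) ε) := rfl
    rw [this, hbk]; simp [gBit]
  have e2 : ∀ k, pPre b (N + M + 3*k + 2) ε = ((pPre b (N + M + 3*k) ε)^2)^2 := by
    intro k
    have hbk : b (N + M + 3*k + 1) = true := by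
      have : N + M + 3*k + 1 = N + M + (3*k+1) := by omega
      rw [this, hbt (3*k+1)]
      have h3 : (3*k+1) % 3 = 1 := by omega
      rw [h3]; decide
    have h : pPre b (N + M + 3*k + 2) ε = gBit (b (N + M + 3*k + 1)) (pPre b (N + M + 3*k + 1) ε) := rfl
    rw [h, hbk, e1 k]; simp [gBit]
  have e3 : ∀ k, pPre b (N + M + 3*(k+1)) ε
      = 2 * ((pPre b (N + M + 3*k) ε)^2)^2 - (((pPre b (N + M + 3*k) ε)^2)^2)^2 := by
    intro k
    have hbk : b (N + M + 3*k + 2) = false := by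
      have : N + M + 3*k + 2 = N + M + (3*k+2) := by omega
      rw [this, hbt (3*k+2)]
      have h3 : (3*k+2) % 3 = 2 := by omega
      rw [h3]; decide
    have h : N + M + 3*(k+1) = (N + M + 3*k + 2) + 1 := by omega
    rw [h, pPre_succ, hbk, e2 k]
    simp [gBit]
  -- main decay bound at block starts
  have hQ : ∀ k, pPre b (N + M + 3*k) ε ≤ (1/4) * (1/2)^k := by
    intro k
    induction k with
    | zero => simpa using ha0
    | succ k ih =>
        set t := pPre b (N + M + 3*k) ε with htdef
        have ht0 : 0 ≤ t := (hIcc _).1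
        have ht14 : t ≤ 1/4 := le_trans ih (by
          have : (1/2:ℝ)^k ≤ 1 := pow_le_one₀ (by norm_num) (by norm_num)
          nlinarith)
        rw [e3 k, ← htdef]
        have ht3 : t^3 ≤ 1/64 := by
          calc t^3 ≤ (1/4)^3 := pow_le_pow_left₀ ht0 ht14 3
            _ = 1/64 := by norm_num
        have key : 2 * (t^2)^2 - ((t^2)^2)^2 ≤ t/2 := by
          nlinarith [mul_nonneg ht0 (sub_nonneg.2 ht3), sq_nonneg ((t^2)^2)]
        calc 2 * (t^2)^2 - ((t^2)^2)^2 ≤ t/2 := key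
          _ ≤ ((1/4) * (1/2)^k)/2 := by linarith
          _ = (1/4) * (1/2)^(k+1) := by rw [pow_succ]; ring
  -- bound for all n past N+M
  have hAll : ∀ n, N + M ≤ n → pPre b n ε ≤ (1/4) * (1/2)^((n - (N+M))/3) := by
    intro n hn
    set m := n - (N+M) with hm
    set k := m / 3 with hk
    have hr : m % 3 = 0 ∨ m % 3 = 1 ∨ m % 3 = 2 := by omega
    have hQk := hQ k
    have htk0 : 0 ≤ pPre b (N + M + 3*k) ε := (hIcc _).1
    have htk1 : pPre b (N + M + 3*k) ε ≤ 1 := (hIcc _).2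
    have hsq : (pPre b (N + M + 3*k) ε)^2 ≤ pPre b (N + M + 3*k) ε := sq_le_self htk0 htk1
    have hsq0 : 0 ≤ (pPre b (N + M + 3*k) ε)^2 := sq_nonneg _
    have hsq1 : (pPre b (N + M + 3*k) ε)^2 ≤ 1 := le_trans hsq htk1
    rcases hr with h | h | h
    · have : n = N + M + 3*k := by omega
      rw [this]; exact hQk
    · have : n = N + M + 3*k + 1 := by omega
      rw [this, e1 k]
      linarith
    · have : n = N + M + 3*k + 2 := by omega
      rw [this, e2 k]
      have := sq_le_self hsq0 hsq1
      linarith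
  refine ⟨b, ?_, ?_, ?_, ?_⟩
  · -- Tendsto 0
    rw [Metric.tendsto_atTop]
    intro η hη
    obtain ⟨k0, hk0⟩ : ∃ k0 : ℕ, (1/2:ℝ)^k0 < η :=
      exists_pow_lt_of_lt_one hη (by norm_num)
    refine ⟨N + M + 3*k0, fun n hn => ?_⟩
    have hn' : N + M ≤ n := by omega
    have hb1 := hAll n hn'
    have hkk : k0 ≤ (n - (N+M))/3 := by omega
    have hmono : (1/2:ℝ)^((n - (N+M))/3) ≤ (1/2)^k0 :=
      pow_le_pow_of_le_one (by norm_num) (by norm_num) hkk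
    have h0' : 0 ≤ pPre b n ε := (hIcc n).1
    rw [Real.dist_eq, sub_zero, abs_of_nonneg h0']
    nlinarith
  · -- infinitely many trues
    intro n
    refine ⟨N + M + 2*n, ?_⟩
    have h : N + M + 2*n + n = N + M + 3*n := by omega
    rw [h, hbt (3*n)]
    have h3 : (3*n) % 3 = 0 := by omega
    rw [h3]; decide
  · -- infinitely many falses
    intro n
    refine ⟨N + M + 2*n + 2, ?_⟩
    have h : N + M + 2*n + 2 + n = N + M + (3*n + 2) := by omega
    rw [h, hbt (3*n+2)]
    have h3 : (3*n+2) % 3 = 2 := by omega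
    rw [h3]; decide
  · -- closeness
    have hsplit := fBin_split b N
    have hS : ∑ i ∈ Finset.range N, cSeq b i = ∑ i ∈ Finset.range N, cSeq d i := by
      apply Finset.sum_congr rfl
      intro i hi
      unfold cSeq
      rw [hbp i (Finset.mem_range.1 hi)]
    have hxeq := digit_sum (x := x) N
    have hT0 := tail_nonneg b N
    have hT1 := tail_le b N
    have hr0 : 0 ≤ rSeq x N := (rSeq_mem hx N).1
    have hr1 : rSeq x N ≤ 1 := (rSeq_mem hx N).2
    have h2N : rSeq x N / 2^N ≤ (1/2:ℝ)^N := by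
      rw [div_pow, one_pow]
      gcongr
    have hrdiv0 : 0 ≤ rSeq x N / 2^N := div_nonneg hr0 (by positivity)
    rw [hS] at hsplit
    rw [abs_sub_lt_iff]
    constructor <;> linarith [hsplit, hxeq, hT0, hT1, h2N, hN, hrdiv0]


end GB

/-- The non-dyadic good channels and the non-dyadic bad channels are each dense in `[0,1]`. -/
theorem good_bad_minus_dyadics_dense :
    ∀ ε ∈ Set.Ioo (0 : ℝ) 1,
      Set.Icc (0 : ℝ) 1 ⊆ closure (Gset ε \ dyadics) ∧
      Set.Icc (0 : ℝ) 1 ⊆ closure (Bset ε \ dyadics) := by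
  intro ε hε
  constructor
  · intro x hx
    rw [Metric.mem_closure_iff]
    intro δ hδ
    obtain ⟨b, hb0, hbtr, hbfa, hclose⟩ := GB.approx_good hε hx hδ
    refine ⟨fBin b, ⟨⟨b, rfl, hb0⟩, ?_⟩, ?_⟩
    · intro hdy
      exact GB.not_dyadic hbtr hbfa hdy.2
    · rw [Real.dist_eq, abs_sub_comm]; exact hclose
  · intro x hx
    rw [Metric.mem_closure_iff]
    intro δ hδ
    have hε' : (1 - ε) ∈ Set.Ioo (0:ℝ) 1 := ⟨by linarith [hε.2], by linarith [hε.1]⟩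
    have hx' : (1 - x) ∈ Set.Icc (0:ℝ) 1 := ⟨by linarith [hx.2], by linarith [hx.1]⟩
    obtain ⟨b, hb0, hbtr, hbfa, hclose⟩ := GB.approx_good hε' hx' hδ
    set b' : ℕ → Bool := fun i => !(b i) with hb'
    have hnotb : fBin b' = 1 - fBin b := GB.fBin_not b
    refine ⟨fBin b', ⟨⟨b', rfl, ?_⟩, ?_⟩, ?_⟩
    · have hpp : ∀ n, pPre b' n ε = 1 - pPre b n (1 - ε) := by
        intro n
        have h := GB.pPre_not b (1 - ε) n
        rwa [sub_sub_cancel] at h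
      simp only [hpp]
      have h : Tendsto (fun n => 1 - pPre b n (1-ε)) atTop (nhds (1 - 0)) :=
        Tendsto.sub tendsto_const_nhds hb0
      simpa using h
    · intro hdy
      apply GB.not_dyadic (b := b) hbtr hbfa
      obtain ⟨p, m, hpm⟩ := hdy.2
      refine ⟨2^m - p, m, ?_⟩
      rw [hnotb] at hpm
      have h2 : (0:ℝ) < 2^m := by positivity
      push_cast
      field_simp at hpm ⊢
      linarith
    · rw [Real.dist_eq, hnotb]
      have h : x - (1 - fBin b) = fBin b - (1 - x) := by ring
      rw [h]
      exact hclose
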